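/- For every real t with 0 < t < π, one has cos t < (sin t / t)². -/
import Mathlib

open Real

/-- For `0 < t < π`, one has `cos t < (sin t / t)²`. -/
theorem cos_lt_sq_sin_div (t : ℝ) (ht0 : 0 < t) (htπ : t < π) :
    Real.cos t < (Real.sin t / t) ^ 2 := by
  have hx0 : 0 < t / 2 := by linarith
  have hx2 : t / 2 < π / 2 := by linarith
  have hcos : 0 < Real.cos (t / 2) := Real.cos_pos_of_mem_Ioo ⟨by linarith, hx2⟩
  have htan : t / 2 < Real.tan (t / 2) := Real.lt_tan hx0 hx2
  have hsinx : t / 2 * Real.cos (t / 2) < Real.sin (t / 2) := by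
    rw [Real.tan_eq_sin_div_cos, lt_div_iff₀ hcos] at htan
    linarith
  have hsint : Real.sin t = 2 * Real.sin (t / 2) * Real.cos (t / 2) := by
    rw [← Real.sin_two_mul]; ring_nf
  have hsq : Real.cos (t / 2) ^ 2 = 1 / 2 + Real.cos t / 2 := by
    have := Real.cos_sq (t / 2)
    rwa [show 2 * (t / 2) = t by ring] at this
  have hbound : t * (1 / 2 + Real.cos t / 2) < Real.sin t := by
    nlinarith [sq_nonneg (Real.cos (t / 2))]
  have hcpos : 0 < 1 / 2 + Real.cos t / 2 := by nlinarith [sq_nonneg (Real.cos (t/2))]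
  rw [div_pow, lt_div_iff₀ (by positivity)]
  nlinarith [sq_nonneg (1 - Real.cos t), mul_pos ht0 hcpos]
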